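/- Change of variable in the uniqueness lemma: let h be continuous, positive and increasing on [a,∞), H(s) = ∫_a^s h satisfying Keller–Osserman, and let v : (0,R) → ℝ be C², v ≥ a + 1, solving v'' + (N-1)/r v' = h(v), with 0 ≤ v' < √(2H(v)). Define w(r) = ∫_{v(r)}^∞ ds/√(2H(s)). Then w is C², satisfies w'' + (N-1)/r w' = b(r) (|w'(r)|² − 1) with b(r) = h(v(r))/√(2 H(v(r))), and |w'(r)| < 1. -/

import Mathlib

open MeasureTheory Set intervalIntegral

theorem split_lem (c x : ℝ) (hcx : c ≤ x) (f : ℝ → ℝ) (hfi : IntegrableOn f (Set.Ici c)) :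
    ∫ s in Set.Ici c, f s = (∫ s in c..x, f s) + ∫ s in Set.Ici x, f s := by
  have hsub : Set.Ioc c x ∪ Set.Ioi x ⊆ Set.Ici c := by
    rw [Set.Ioc_union_Ioi_eq_Ioi hcx]; exact Set.Ioi_subset_Ici_self
  rw [MeasureTheory.integral_Ici_eq_integral_Ioi, ← Set.Ioc_union_Ioi_eq_Ioi hcx,
    MeasureTheory.setIntegral_union Set.Ioc_disjoint_Ioi_same measurableSet_Ioi
      (hfi.mono_set ((Set.subset_union_left).trans hsub))
      (hfi.mono_set ((Set.subset_union_right).trans hsub)),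
    intervalIntegral.integral_of_le hcx, MeasureTheory.integral_Ici_eq_integral_Ioi]

theorem stmt12 (N : ℕ) (hN : 1 ≤ N) (R a : ℝ) (hR : 0 < R)
    (h : ℝ → ℝ) (hc : Continuous h)
    (hmono : MonotoneOn h (Set.Ici a)) (hpos : ∀ s ≥ a, 0 < h s)
    (H : ℝ → ℝ) (hHdef : H = fun s => ∫ t in a..s, h t)
    (hKO : MeasureTheory.IntegrableOn (fun s => 1 / Real.sqrt (H s)) (Set.Ici (a + 1)))
    (v : ℝ → ℝ) (hv : ContDiffOn ℝ 2 v (Set.Ioo 0 R))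
    (hva : ∀ r ∈ Set.Ioo 0 R, a + 1 ≤ v r)
    (hode : ∀ r ∈ Set.Ioo 0 R,
      deriv (deriv v) r + ((N : ℝ) - 1) / r * deriv v r = h (v r))
    (hgrad : ∀ r ∈ Set.Ioo 0 R,
      0 ≤ deriv v r ∧ (deriv v r) ^ 2 < 2 * H (v r))
    (w : ℝ → ℝ)
    (hwdef : w = fun r => ∫ s in Set.Ici (v r), 1 / Real.sqrt (2 * H s)) :
    ∀ r ∈ Set.Ioo 0 R,
      DifferentiableAt ℝ w r ∧ DifferentiableAt ℝ (deriv w) r ∧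
      deriv w r = -deriv v r / Real.sqrt (2 * H (v r)) ∧
      |deriv w r| < 1 ∧
      deriv (deriv w) r + ((N : ℝ) - 1) / r * deriv w r =
        (h (v r) / Real.sqrt (2 * H (v r))) * ((deriv w r) ^ 2 - 1) := by
  set f : ℝ → ℝ := fun s => 1 / Real.sqrt (2 * H s) with hfdef
  -- derivative of H
  have hHd : ∀ x : ℝ, HasDerivAt H (h x) x := by
    intro x
    rw [hHdef]
    exact intervalIntegral.integral_hasDerivAt_right (hc.intervalIntegrable a x)
      (hc.stronglyMeasurableAtFilter _ _) hc.continuousAt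
  -- positivity of H
  have hHpos : ∀ x, a < x → 0 < H x := by
    intro x hax
    rw [hHdef]
    exact intervalIntegral.intervalIntegral_pos_of_pos_on (hc.intervalIntegrable a x)
      (fun s hs => hpos s hs.1.le) hax
  have hspos : ∀ x, a < x → 0 < Real.sqrt (2 * H x) := fun x hax =>
    Real.sqrt_pos.2 (by linarith [hHpos x hax])
  -- continuity of f on Ioi a
  have hfcont : ∀ x, a < x → ContinuousAt f x := by
    intro x hax
    have hHcont : Continuous H := by
      rw [continuous_iff_continuousAt]; exact fun y => (hHd y).continuousAt
    exact continuousAt_const.div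
      ((Real.continuous_sqrt.comp (continuous_const.mul hHcont)).continuousAt)
      (hspos x hax).ne'
  -- integrability of f
  have hKO2 : IntegrableOn f (Set.Ici (a + 1)) := by
    refine MeasureTheory.IntegrableOn.congr_fun (hKO.const_mul ((Real.sqrt 2)⁻¹))
      ?_ measurableSet_Ici
    intro s _
    simp only [hfdef, Real.sqrt_mul (by norm_num : (0:ℝ) ≤ 2), one_div, mul_inv]
  have hfint : ∀ x, a < x → IntegrableOn f (Set.Ici x) := by
    intro x hax
    rcases le_or_gt (a + 1) x with hx1 | hx1
    · exact hKO2.mono_set (Set.Ici_subset_Ici.2 hx1)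
    · have : Set.Icc x (a + 1) ∪ Set.Ici (a + 1) = Set.Ici x :=
        Set.Icc_union_Ici_eq_Ici hx1.le
      rw [← this]
      refine MeasureTheory.IntegrableOn.union ?_ hKO2
      exact (ContinuousOn.integrableOn_Icc
        (fun s hs => (hfcont s (lt_of_lt_of_le hax hs.1)).continuousWithinAt))
  -- derivative of the tail integral
  have hG : ∀ x, a < x → HasDerivAt (fun y => ∫ s in Set.Ici y, f s) (-(f x)) x := by
    intro x hax
    set c := (a + x) / 2 with hcdef
    have hac : a < c := by rw [hcdef]; linarith
    have hcx : c < x := by rw [hcdef]; linarith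
    have hdint : HasDerivAt (fun y => (∫ s in Set.Ici c, f s) - ∫ s in c..y, f s)
        (-(f x)) x := by
      refine HasDerivAt.const_sub _ ?_
      refine intervalIntegral.integral_hasDerivAt_right ?_ ?_ (hfcont x hax)
      · exact ((hfint c hac).mono_set (by
          rw [Set.uIcc_of_le hcx.le]; exact Set.Icc_subset_Ici_self)).intervalIntegrable
      · exact (ContinuousOn.stronglyMeasurableAtFilter isOpen_Ioi
          (fun s hs => (hfcont s hs).continuousWithinAt) x hax)
    refine hdint.congr_of_eventuallyEq ?_
    filter_upwards [isOpen_Ioi.mem_nhds (show c < x from hcx)] with y hy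
    rw [split_lem c y (le_of_lt hy) f (hfint c hac)]
    ring
  -- main derivative formula for w, valid on all of Ioo 0 R
  have main : ∀ ρ ∈ Set.Ioo 0 R, HasDerivAt w
      (-(deriv v ρ / Real.sqrt (2 * H (v ρ)))) ρ := by
    intro ρ hρ
    have hvρ : a < v ρ := by have := hva ρ hρ; linarith
    have hvd : HasDerivAt v (deriv v ρ) ρ :=
      (((hv.contDiffAt (isOpen_Ioo.mem_nhds hρ)).differentiableAt
        (by norm_num))).hasDerivAt
    have := (hG (v ρ) hvρ).comp ρ hvd
    rw [hwdef]
    exact this.congr_deriv (by change -(1 / Real.sqrt (2 * H (v ρ))) * deriv v ρ = _; ring)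
  intro r hr
  obtain ⟨hr0, hrR⟩ := hr
  have hrIoo : r ∈ Set.Ioo 0 R := ⟨hr0, hrR⟩
  have hvr : a < v r := by have := hva r hrIoo; linarith
  have hs0 : Real.sqrt (2 * H (v r)) ≠ 0 := (hspos _ hvr).ne'
  have hwAt := main r hrIoo
  have hderivw : deriv w r = -deriv v r / Real.sqrt (2 * H (v r)) := by
    rw [hwAt.deriv]; ring
  -- derivative of v' at r
  have hcd1 : ContDiffOn ℝ 1 (deriv v) (Set.Ioo 0 R) :=
    hv.deriv_of_isOpen isOpen_Ioo (by norm_num)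
  have hv'd : HasDerivAt (deriv v) (deriv (deriv v) r) r :=
    ((hcd1.contDiffAt (isOpen_Ioo.mem_nhds hrIoo)).differentiableAt
      (by norm_num)).hasDerivAt
  have hvd : HasDerivAt v (deriv v r) r :=
    (((hv.contDiffAt (isOpen_Ioo.mem_nhds hrIoo)).differentiableAt
      (by norm_num))).hasDerivAt
  -- derivative of the composite sqrt term
  have h2Hv : HasDerivAt (fun ρ => 2 * H (v ρ)) (2 * (h (v r) * deriv v r)) r :=
    ((hHd (v r)).comp r hvd).const_mul 2
  have hsq : HasDerivAt (fun ρ => Real.sqrt (2 * H (v ρ)))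
      (1 / (2 * Real.sqrt (2 * H (v r))) * (2 * (h (v r) * deriv v r))) r :=
    (Real.hasDerivAt_sqrt (by linarith [hHpos _ hvr] : (0:ℝ) < 2 * H (v r)).ne').comp r h2Hv
  set s := Real.sqrt (2 * H (v r)) with hsdef
  set B := deriv v r with hBdef
  set A := deriv (deriv v) r with hAdef
  have hφ : HasDerivAt (fun ρ => -(deriv v ρ / Real.sqrt (2 * H (v ρ))))
      (-((A * s - B * (1 / (2 * s) * (2 * (h (v r) * B)))) / s ^ 2)) r :=
    (hv'd.div hsq hs0).neg
  have hDw : HasDerivAt (deriv w)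
      (-((A * s - B * (1 / (2 * s) * (2 * (h (v r) * B)))) / s ^ 2)) r := by
    refine hφ.congr_of_eventuallyEq ?_
    filter_upwards [isOpen_Ioo.mem_nhds hrIoo] with ρ hρ
    exact (main ρ hρ).deriv
  have hgr := hgrad r hrIoo
  have hode' := hode r hrIoo
  refine ⟨hwAt.differentiableAt, hDw.differentiableAt, hderivw, ?_, ?_⟩
  · -- |deriv w r| < 1
    rw [hderivw]
    have hB0 : 0 ≤ B := hgr.1
    have hBs : B < s := by
      nlinarith [Real.sq_sqrt (by linarith [hHpos _ hvr] : (0:ℝ) ≤ 2 * H (v r)), hgr.2,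
        hspos _ hvr]
    rw [abs_div, abs_neg, abs_of_nonneg hB0, abs_of_pos (hspos _ hvr),
      div_lt_one (hspos _ hvr)]
    exact hBs
  · rw [hDw.deriv, hderivw]
    have hr0' : r ≠ 0 := hr0.ne'
    have hA : A = h (v r) - ((N : ℝ) - 1) / r * B := by linarith
    rw [hA]
    field_simp
    ring
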